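/- Let d ≥ 2 and n = 2, and let f be a unanimous, group-strategyproof mechanism for 2 agents in ℝ^d. Then the map (x_1, x_2) ↦ C(f(x_1, x_2)) sending a profile to the centroid of the output distribution is a continuous function from (ℝ^d)² to ℝ^d. -/

import Mathlib

open MeasureTheory ENNReal

noncomputable section

/-- Points in `d`-dimensional Euclidean space. -/
abbrev Pt (d : ℕ) : Type := EuclideanSpace ℝ (Fin d)

/-- A (randomized) mechanism: each profile is mapped to a Borel probability measure
with finite first moment. -/
def IsMechanism {d n : ℕ} (f : (Fin n → Pt d) → Measure (Pt d)) : Prop :=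
  ∀ x, IsProbabilityMeasure (f x) ∧ Integrable (fun y => y) (f x)

/-- Unanimity: if all agents report `z`, the output is the Dirac measure at `z`. -/
def Unanimous {d n : ℕ} (f : (Fin n → Pt d) → Measure (Pt d)) : Prop :=
  ∀ z : Pt d, f (fun _ => z) = Measure.dirac z

/-- Group-strategyproofness: for every profile, nonempty coalition, and deviation by
the coalition, some member of the coalition does not strictly gain. -/
def GroupStrategyproof {d n : ℕ} (f : (Fin n → Pt d) → Measure (Pt d)) : Prop :=
  ∀ x x' : Fin n → Pt d, ∀ S : Finset (Fin n), S.Nonempty →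
    (∀ i ∉ S, x' i = x i) →
    ∃ i ∈ S, ∫ y, ‖y - x i‖ ∂(f x') ≥ ∫ y, ‖y - x i‖ ∂(f x)

/-- The centroid of a distribution `P`: its vector-valued expectation. -/
def centroid {d : ℕ} (P : Measure (Pt d)) : Pt d := ∫ y, y ∂P

namespace TwoAgentsAux

variable {d : ℕ} {f : (Fin 2 → Pt d) → Measure (Pt d)}

/-- Expected cost of agent `i`. -/
def C (f : (Fin 2 → Pt d) → Measure (Pt d)) (i : Fin 2) (x : Fin 2 → Pt d) : ℝ :=
  ∫ y, ‖y - x i‖ ∂(f x)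

lemma integrable_norm_sub (hmech : IsMechanism f) (x : Fin 2 → Pt d) (c : Pt d) :
    Integrable (fun y => ‖y - c‖) (f x) := by
  haveI := (hmech x).1
  exact ((hmech x).2.sub (integrable_const c)).norm

lemma C_nonneg (x : Fin 2 → Pt d) (i : Fin 2) : 0 ≤ C f i x :=
  integral_nonneg fun y => norm_nonneg _

lemma mean_sub (hmech : IsMechanism f) (x : Fin 2 → Pt d) (c : Pt d) :
    ∫ y, (y - c) ∂(f x) = centroid (f x) - c := by
  haveI := (hmech x).1
  rw [integral_sub (hmech x).2 (integrable_const c), integral_const]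
  simp [centroid]

lemma norm_mean_sub_le (hmech : IsMechanism f) (x : Fin 2 → Pt d) (i : Fin 2) :
    ‖centroid (f x) - x i‖ ≤ C f i x := by
  rw [← mean_sub hmech x (x i)]
  exact norm_integral_le_integral_norm _

lemma const_profile (x : Fin 2 → Pt d) (h : x 0 = x 1) : x = fun _ => x 0 := by
  funext i
  fin_cases i
  · rfl
  · exact h.symm

/-- triangle comparison between the two costs -/
lemma C_triangle (hmech : IsMechanism f) (x : Fin 2 → Pt d) (i j : Fin 2) :
    C f i x ≤ C f j x + ‖x i - x j‖ := by
  haveI := (hmech x).1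
  have h : ∀ y : Pt d, ‖y - x i‖ ≤ ‖y - x j‖ + ‖x j - x i‖ := fun y => by
    have := norm_add_le (y - x j) (x j - x i)
    simpa using this
  calc C f i x ≤ ∫ y, (‖y - x j‖ + ‖x j - x i‖) ∂(f x) :=
        integral_mono (integrable_norm_sub hmech x (x i))
          ((integrable_norm_sub hmech x (x j)).add (integrable_const _)) h
    _ = C f j x + ‖x j - x i‖ := by
        rw [integral_add (integrable_norm_sub hmech x (x j)) (integrable_const _),
          integral_const]
        simp [C]
    _ = C f j x + ‖x i - x j‖ := by rw [norm_sub_rev]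

/-- The key identity: the two costs sum to the distance between the two reports. -/
lemma C_sum (hmech : IsMechanism f) (huna : Unanimous f) (hgsp : GroupStrategyproof f)
    (x : Fin 2 → Pt d) : C f 0 x + C f 1 x = ‖x 0 - x 1‖ := by
  by_cases hx : x 0 = x 1
  · rw [const_profile x hx]
    have hdir := huna (x 0)
    have : ∀ i : Fin 2, C f i (fun _ => x 0) = 0 := by
      intro i
      simp only [C, hdir, integral_dirac]
      simp
    rw [this 0, this 1]
    simp [hx]
  · -- lower bound
    have hm0 := norm_mean_sub_le hmech x 0
    have hm1 := norm_mean_sub_le hmech x 1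
    have hlow : ‖x 0 - x 1‖ ≤ C f 0 x + C f 1 x := by
      have : x 0 - x 1 = (centroid (f x) - x 1) - (centroid (f x) - x 0) := by abel
      calc ‖x 0 - x 1‖ = ‖(centroid (f x) - x 1) - (centroid (f x) - x 0)‖ := by rw [← this]
        _ ≤ ‖centroid (f x) - x 1‖ + ‖centroid (f x) - x 0‖ := norm_sub_le _ _
        _ ≤ C f 1 x + C f 0 x := add_le_add hm1 hm0
        _ = C f 0 x + C f 1 x := by ring
    -- upper bound
    set D : ℝ := ‖x 0 - x 1‖ with hD
    have hDpos : 0 < D := by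
      rw [hD]
      exact norm_sub_pos_iff.mpr hx
    have h01 := C_triangle hmech x 0 1
    have h10 : C f 1 x ≤ C f 0 x + D := by
      have := C_triangle hmech x 1 0
      rwa [norm_sub_rev] at this
    have hhigh : C f 0 x + C f 1 x ≤ D := by
      by_contra hcon
      push_neg at hcon
      set c0 := C f 0 x
      set c1 := C f 1 x
      set s : ℝ := (c0 + D - c1) / 2 with hs
      have hs0 : 0 ≤ s := by
        have := h10
        simp only [hs]
        linarith
      have hsD : s ≤ D := by
        simp only [hs]
        linarith [h01]
      set z : Pt d := x 0 + (s / D) • (x 1 - x 0) with hz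
      have hz0 : ‖z - x 0‖ = s := by
        have : z - x 0 = (s / D) • (x 1 - x 0) := by rw [hz]; abel
        rw [this, norm_smul, Real.norm_eq_abs,
          abs_of_nonneg (div_nonneg hs0 hDpos.le), norm_sub_rev, ← hD,
          div_mul_cancel₀ _ hDpos.ne']
      have hz1 : ‖z - x 1‖ = D - s := by
        have h1 : z - x 1 = (s / D - 1) • (x 1 - x 0) := by
          rw [hz, sub_smul, one_smul]
          abel
        rw [h1, norm_smul, Real.norm_eq_abs, norm_sub_rev, ← hD,
          abs_of_nonpos (by rw [sub_nonpos]; exact div_le_one_of_le₀ hsD hDpos.le)]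
        field_simp
        ring
      obtain ⟨i, _, hge⟩ := hgsp x (fun _ => z) Finset.univ Finset.univ_nonempty
        (fun i hi => absurd (Finset.mem_univ i) hi)
      rw [huna z, integral_dirac] at hge
      fin_cases i
      · have hge' : ‖z - x 0‖ ≥ C f 0 x := hge
        rw [hz0] at hge'
        simp only [hs] at hge'
        linarith
      · have hge' : ‖z - x 1‖ ≥ C f 1 x := hge
        rw [hz1] at hge'
        simp only [hs] at hge'
        linarith
    linarith

/-- Strategyproofness for agent 0: one-sided Lipschitz bound for `C f 0` in coordinate 0. -/
lemma lip0 (hmech : IsMechanism f) (hgsp : GroupStrategyproof f)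
    (x x' : Fin 2 → Pt d) (h : x' 1 = x 1) :
    C f 0 x ≤ C f 0 x' + ‖x 0 - x' 0‖ := by
  obtain ⟨i, hi, hge⟩ := hgsp x x' {0} ⟨0, Finset.mem_singleton_self 0⟩
    (fun i hi => by
      fin_cases i
      · exact absurd (Finset.mem_singleton_self 0) hi
      · exact h)
  rw [Finset.mem_singleton] at hi
  subst hi
  haveI := (hmech x').1
  have hle : ∫ y, ‖y - x 0‖ ∂(f x') ≤ C f 0 x' + ‖x 0 - x' 0‖ := by
    have h2 : ∀ y : Pt d, ‖y - x 0‖ ≤ ‖y - x' 0‖ + ‖x' 0 - x 0‖ := fun y => by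
      have := norm_add_le (y - x' 0) (x' 0 - x 0)
      simpa using this
    calc ∫ y, ‖y - x 0‖ ∂(f x') ≤ ∫ y, (‖y - x' 0‖ + ‖x' 0 - x 0‖) ∂(f x') :=
          integral_mono (integrable_norm_sub hmech x' (x 0))
            ((integrable_norm_sub hmech x' (x' 0)).add (integrable_const _)) h2
      _ = C f 0 x' + ‖x' 0 - x 0‖ := by
          rw [integral_add (integrable_norm_sub hmech x' (x' 0)) (integrable_const _),
            integral_const]
          simp [C]
      _ = C f 0 x' + ‖x 0 - x' 0‖ := by rw [norm_sub_rev]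
  exact le_trans hge hle

/-- Strategyproofness for agent 1: one-sided Lipschitz bound for `C f 1` in coordinate 1. -/
lemma lip1 (hmech : IsMechanism f) (hgsp : GroupStrategyproof f)
    (x x' : Fin 2 → Pt d) (h : x' 0 = x 0) :
    C f 1 x ≤ C f 1 x' + ‖x 1 - x' 1‖ := by
  obtain ⟨i, hi, hge⟩ := hgsp x x' {1} ⟨1, Finset.mem_singleton_self 1⟩
    (fun i hi => by
      fin_cases i
      · exact h
      · exact absurd (Finset.mem_singleton_self 1) hi)
  rw [Finset.mem_singleton] at hi
  subst hi
  haveI := (hmech x').1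
  have hle : ∫ y, ‖y - x 1‖ ∂(f x') ≤ C f 1 x' + ‖x 1 - x' 1‖ := by
    have h2 : ∀ y : Pt d, ‖y - x 1‖ ≤ ‖y - x' 1‖ + ‖x' 1 - x 1‖ := fun y => by
      have := norm_add_le (y - x' 1) (x' 1 - x 1)
      simpa using this
    calc ∫ y, ‖y - x 1‖ ∂(f x') ≤ ∫ y, (‖y - x' 1‖ + ‖x' 1 - x 1‖) ∂(f x') :=
          integral_mono (integrable_norm_sub hmech x' (x 1))
            ((integrable_norm_sub hmech x' (x' 1)).add (integrable_const _)) h2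
      _ = C f 1 x' + ‖x' 1 - x 1‖ := by
          rw [integral_add (integrable_norm_sub hmech x' (x' 1)) (integrable_const _),
            integral_const]
          simp [C]
      _ = C f 1 x' + ‖x 1 - x' 1‖ := by rw [norm_sub_rev]
  exact le_trans hge hle

/-- Joint Lipschitz-type bound for `C f 0`. -/
lemma C0_close (hmech : IsMechanism f) (huna : Unanimous f) (hgsp : GroupStrategyproof f)
    (x x' : Fin 2 → Pt d) :
    |C f 0 x - C f 0 x'| ≤ ‖x 0 - x' 0‖ + 3 * ‖x 1 - x' 1‖ := by
  -- intermediate profile: coordinate 0 from x', coordinate 1 from x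
  set x'' : Fin 2 → Pt d := Function.update x 0 (x' 0) with hx''
  have h0 : x'' 0 = x' 0 := Function.update_self _ _ _
  have h1 : x'' 1 = x 1 := Function.update_of_ne (by decide) _ _
  have ha : C f 0 x ≤ C f 0 x'' + ‖x 0 - x' 0‖ := by
    have := lip0 hmech hgsp x x'' h1
    rwa [h0] at this
  have hb : C f 0 x'' ≤ C f 0 x + ‖x 0 - x' 0‖ := by
    have := lip0 hmech hgsp x'' x h1.symm
    rwa [h0, norm_sub_rev] at this
  have hc : C f 1 x'' ≤ C f 1 x' + ‖x 1 - x' 1‖ := by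
    have := lip1 hmech hgsp x'' x' h0.symm
    rwa [h1] at this
  have hd : C f 1 x' ≤ C f 1 x'' + ‖x 1 - x' 1‖ := by
    have := lip1 hmech hgsp x' x'' h0
    rwa [h1, norm_sub_rev] at this
  have hsum'' := C_sum hmech huna hgsp x''
  have hsum' := C_sum hmech huna hgsp x'
  have hDdiff : |‖x'' 0 - x'' 1‖ - ‖x' 0 - x' 1‖| ≤ ‖x 1 - x' 1‖ := by
    rw [h0, h1]
    have h5 := abs_norm_sub_norm_le (x' 0 - x 1) (x' 0 - x' 1)
    have h6 : (x' 0 - x 1) - (x' 0 - x' 1) = x' 1 - x 1 := by abel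
    rw [h6] at h5
    calc |‖x' 0 - x 1‖ - ‖x' 0 - x' 1‖| ≤ ‖x' 1 - x 1‖ := h5
      _ = ‖x 1 - x' 1‖ := norm_sub_rev _ _
  rw [abs_le] at hDdiff ⊢
  constructor
  · linarith [hDdiff.1, hDdiff.2]
  · linarith [hDdiff.1, hDdiff.2]

lemma C0_continuous (hmech : IsMechanism f) (huna : Unanimous f)
    (hgsp : GroupStrategyproof f) : Continuous (C f 0) := by
  have : LipschitzWith 4 (C f 0) := by
    apply LipschitzWith.of_dist_le_mul
    intro x x'
    have h := C0_close hmech huna hgsp x x'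
    have d0 : ‖x 0 - x' 0‖ ≤ dist x x' := by
      rw [← dist_eq_norm]; exact dist_le_pi_dist x x' 0
    have d1 : ‖x 1 - x' 1‖ ≤ dist x x' := by
      rw [← dist_eq_norm]; exact dist_le_pi_dist x x' 1
    rw [Real.dist_eq]
    have h4 : ((4 : NNReal) : ℝ) = 4 := by norm_num
    rw [h4]
    linarith
  exact this.continuous

/-- Barycentric formula for the centroid when the reports are distinct. -/
lemma centroid_formula (hmech : IsMechanism f) (huna : Unanimous f)
    (hgsp : GroupStrategyproof f) (x : Fin 2 → Pt d) (hx : x 0 ≠ x 1) :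
    centroid (f x) = x 0 + (C f 0 x / ‖x 0 - x 1‖) • (x 1 - x 0) := by
  set m := centroid (f x) with hm
  set D : ℝ := ‖x 0 - x 1‖ with hD
  have hDpos : 0 < D := norm_sub_pos_iff.mpr hx
  have hsum := C_sum hmech huna hgsp x
  have hm0 := norm_mean_sub_le hmech x 0
  have hm1 := norm_mean_sub_le hmech x 1
  -- equality versions
  have hlow : D ≤ ‖m - x 0‖ + ‖m - x 1‖ := by
    have h6 : x 0 - x 1 = (m - x 1) - (m - x 0) := by abel
    calc D = ‖(m - x 1) - (m - x 0)‖ := by rw [hD, h6]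
      _ ≤ ‖m - x 1‖ + ‖m - x 0‖ := norm_sub_le _ _
      _ = ‖m - x 0‖ + ‖m - x 1‖ := by ring
  have he0 : ‖m - x 0‖ = C f 0 x := by
    have := C_nonneg (f := f) x 0
    have := C_nonneg (f := f) x 1
    linarith
  have he1 : ‖m - x 1‖ = C f 1 x := by linarith
  -- same-ray argument
  have hray : SameRay ℝ (m - x 0) (x 1 - m) := by
    rw [sameRay_iff_norm_add]
    have h7 : (m - x 0) + (x 1 - m) = x 1 - x 0 := by abel
    rw [h7, norm_sub_rev, ← hD, he0]
    have h8 : ‖x 1 - m‖ = C f 1 x := by rw [norm_sub_rev]; exact he1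
    rw [h8]
    linarith
  obtain ⟨u, a, b, ha, hb, hab, h1, h2⟩ := hray.exists_eq_smul
  have huu : (m - x 0) + (x 1 - m) = u := by
    rw [h1, h2, ← add_smul, hab, one_smul]
  have huv : u = x 1 - x 0 := by rw [← huu]; abel
  have hnu : ‖u‖ = D := by rw [huv, norm_sub_rev]
  have hnorm1 : a * D = C f 0 x := by
    have : ‖m - x 0‖ = a * ‖u‖ := by
      rw [h1, norm_smul, Real.norm_eq_abs, abs_of_nonneg ha]
    rw [hnu] at this
    linarith [he0]
  have haval : a = C f 0 x / D := by
    field_simp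
    linarith
  have : m - x 0 = (C f 0 x / D) • (x 1 - x 0) := by
    rw [h1, huv, haval]
  have h9 : m = x 0 + (C f 0 x / D) • (x 1 - x 0) := by
    rw [← this]; abel
  exact h9

end TwoAgentsAux

open TwoAgentsAux in
/-- For `d ≥ 2` and `n = 2`, the centroid of the output of a unanimous,
group-strategyproof mechanism depends continuously on the profile. -/
theorem two_agents_centroid_continuous {d : ℕ} (hd : 2 ≤ d)
    (f : (Fin 2 → Pt d) → Measure (Pt d))
    (hmech : IsMechanism f)
    (huna : Unanimous f)
    (hgsp : GroupStrategyproof f) :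
    Continuous fun x : Fin 2 → Pt d => centroid (f x) := by
  rw [continuous_iff_continuousAt]
  intro x₀
  by_cases h : x₀ 0 = x₀ 1
  · -- diagonal case: squeeze
    have hval : centroid (f x₀) = x₀ 0 := by
      rw [const_profile x₀ h, huna (x₀ 0)]
      simp [centroid, integral_dirac]
    rw [Metric.continuousAt_iff]
    intro ε hε
    refine ⟨ε / 4, by linarith, fun {x} hx => ?_⟩
    have d0 : ‖x 0 - x₀ 0‖ ≤ dist x x₀ := by
      rw [← dist_eq_norm]; exact dist_le_pi_dist x x₀ 0
    have d1 : ‖x 1 - x₀ 1‖ ≤ dist x x₀ := by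
      rw [← dist_eq_norm]; exact dist_le_pi_dist x x₀ 1
    have hm0 := norm_mean_sub_le hmech x 0
    have hsum := C_sum hmech huna hgsp x
    have hc1 := C_nonneg (f := f) x 1
    have hD : ‖x 0 - x 1‖ ≤ ‖x 0 - x₀ 0‖ + ‖x 1 - x₀ 1‖ := by
      have h6 : x 0 - x 1 = (x 0 - x₀ 0) - (x 1 - x₀ 1) + (x₀ 0 - x₀ 1) := by abel
      rw [h6, h, sub_self, add_zero]
      exact norm_sub_le _ _
    have : dist (centroid (f x)) (centroid (f x₀)) ≤ 3 * dist x x₀ := by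
      rw [hval, dist_eq_norm]
      calc ‖centroid (f x) - x₀ 0‖
          ≤ ‖centroid (f x) - x 0‖ + ‖x 0 - x₀ 0‖ := by
            have h7 : centroid (f x) - x₀ 0 = (centroid (f x) - x 0) + (x 0 - x₀ 0) := by abel
            rw [h7]; exact norm_add_le _ _
        _ ≤ C f 0 x + ‖x 0 - x₀ 0‖ := by linarith
        _ ≤ ‖x 0 - x 1‖ + ‖x 0 - x₀ 0‖ := by linarith
        _ ≤ 3 * dist x x₀ := by linarith
    calc dist (centroid (f x)) (centroid (f x₀)) ≤ 3 * dist x x₀ := this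
      _ < ε := by linarith
  · -- off-diagonal case
    have hU : IsOpen {x : Fin 2 → Pt d | x 0 ≠ x 1} :=
      isOpen_ne_fun (continuous_apply 0) (continuous_apply 1)
    have hg : ContinuousAt
        (fun x : Fin 2 → Pt d => x 0 + (C f 0 x / ‖x 0 - x 1‖) • (x 1 - x 0)) x₀ := by
      have hc0 : Continuous fun x : Fin 2 → Pt d => x 0 := continuous_apply 0
      have hc1 : Continuous fun x : Fin 2 → Pt d => x 1 := continuous_apply 1
      have hCn : Continuous (C f 0) := C0_continuous hmech huna hgsp
      have hDn : Continuous fun x : Fin 2 → Pt d => ‖x 0 - x 1‖ := (hc0.sub hc1).norm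
      have hDne : ‖x₀ 0 - x₀ 1‖ ≠ 0 := norm_ne_zero_iff.mpr (sub_ne_zero_of_ne h)
      exact (hc0.continuousAt).add
        (((hCn.continuousAt).div (hDn.continuousAt) hDne).smul
          ((hc1.sub hc0).continuousAt))
    refine hg.congr ?_
    have hmem : {x : Fin 2 → Pt d | x 0 ≠ x 1} ∈ nhds x₀ := hU.mem_nhds h
    exact Filter.eventuallyEq_of_mem hmem
      (fun x hx => (centroid_formula hmech huna hgsp x hx).symm)
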